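/- arXiv:2411.00923 — 2 statements merged into one kernel-verified Lean document; each statement's English description precedes it below -/
import Mathlib

section
/- For every integer $k \ge 1$, the quantity $\mathcal{E}(k) = \frac{(k!)^4}{(2k+1)\,[(2k)!]^3}$ satisfies $\mathcal{E}(k) \le \left(\frac{1}{8k^2}\right)^k$. -/
lemma key8 (k : ℕ) (hk : 1 ≤ k) :
    ((k:ℝ)+1)^(2*k+3) ≤ (k:ℝ)^(2*k) * ((2*(k:ℝ)+3) * (2*(k:ℝ)+1)^2) := by
  rcases le_or_gt k 5 with h | h
  · interval_cases k <;> norm_num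
  · have hk6 : (6:ℝ) ≤ (k:ℝ) := by exact_mod_cast h
    have hk0 : (0:ℝ) < (k:ℝ) := by linarith
    have h1 : ((k:ℝ)+1)^(2*k) ≤ Real.exp 2 * (k:ℝ)^(2*k) := by
      have hexp : (k:ℝ)+1 ≤ Real.exp (1/(k:ℝ)) * k := by
        have := Real.add_one_le_exp (1/(k:ℝ))
        have h2 : (1/(k:ℝ) + 1) * k ≤ Real.exp (1/(k:ℝ)) * k :=
          mul_le_mul_of_nonneg_right this hk0.le
        calc (k:ℝ)+1 = (1/(k:ℝ) + 1) * k := by field_simp; ring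
          _ ≤ _ := h2
      calc ((k:ℝ)+1)^(2*k) ≤ (Real.exp (1/(k:ℝ)) * k)^(2*k) :=
            pow_le_pow_left₀ (by positivity) hexp _
        _ = Real.exp (1/(k:ℝ))^(2*k) * (k:ℝ)^(2*k) := by rw [mul_pow]
        _ = Real.exp 2 * (k:ℝ)^(2*k) := by
            rw [← Real.exp_nat_mul]
            congr 1
            push_cast
            field_simp

    have he : Real.exp 2 ≤ 7.3890561 := by
      have h1 : Real.exp 1 ≤ 2.7182818286 := (Real.exp_one_lt_d9).le
      have h2 : Real.exp 2 = Real.exp 1 * Real.exp 1 := by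
        rw [← Real.exp_add]; norm_num
      have h0 : (0:ℝ) ≤ Real.exp 1 := (Real.exp_pos 1).le
      nlinarith
    have hpoly : Real.exp 2 * ((k:ℝ)+1)^3 ≤ (2*(k:ℝ)+3) * (2*(k:ℝ)+1)^2 := by
      have hp : (0:ℝ) ≤ ((k:ℝ)+1)^3 := by positivity
      nlinarith [mul_nonneg (mul_nonneg (by linarith : (0:ℝ) ≤ (k:ℝ)-6) (by linarith : (0:ℝ) ≤ (k:ℝ)-6)) (by linarith : (0:ℝ) ≤ (k:ℝ)-6), sq_nonneg ((k:ℝ)-6)]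
    calc ((k:ℝ)+1)^(2*k+3) = ((k:ℝ)+1)^(2*k) * ((k:ℝ)+1)^3 := by ring
      _ ≤ (Real.exp 2 * (k:ℝ)^(2*k)) * ((k:ℝ)+1)^3 :=
          mul_le_mul_of_nonneg_right h1 (by positivity)
      _ = (k:ℝ)^(2*k) * (Real.exp 2 * ((k:ℝ)+1)^3) := by ring
      _ ≤ (k:ℝ)^(2*k) * ((2*(k:ℝ)+3) * (2*(k:ℝ)+1)^2) :=
          mul_le_mul_of_nonneg_left hpoly (by positivity)

lemma main8 (k : ℕ) (hk : 1 ≤ k) :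
    ((k.factorial:ℝ))^4 * (8*(k:ℝ)^2)^k ≤ (2*(k:ℝ)+1) * (((2*k).factorial:ℝ))^3 := by
  induction k, hk using Nat.le_induction with
  | base => norm_num [Nat.factorial]
  | succ n hn ih =>
    have hn0 : (0:ℝ) < (n:ℝ) := by exact_mod_cast hn
    have hkey := key8 n hn
    have hfac1 : ((n+1).factorial : ℝ) = ((n:ℝ)+1) * (n.factorial:ℝ) := by
      rw [Nat.factorial_succ]; push_cast; ring
    have hfac2 : ((2*(n+1)).factorial : ℝ)
        = (2*(n:ℝ)+2) * ((2*(n:ℝ)+1) * ((2*n).factorial:ℝ)) := by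
      have : 2*(n+1) = (2*n+1)+1 := by ring
      rw [this, Nat.factorial_succ, Nat.factorial_succ]
      push_cast; ring
    rw [hfac1, hfac2]
    push_cast
    have haux : ∀ (x:ℝ) (m:ℕ), (8*x^2)^m = 8^m * x^(2*m) := by
      intro x m; rw [mul_pow, ← pow_mul]
    have hpos : (0:ℝ) < (n:ℝ)^(2*n) := by positivity
    rw [← mul_le_mul_iff_right₀ hpos]
    have hprod := mul_le_mul ih hkey (by positivity) (by positivity)
    calc (n:ℝ)^(2*n) * ((((n:ℝ)+1) * (n.factorial:ℝ))^4 * (8*((n:ℝ)+1)^2)^(n+1))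
        = 8*((n:ℝ)+1)^3 * ((((n.factorial:ℝ))^4 * (8*(n:ℝ)^2)^n) * (((n:ℝ)+1)^(2*n+3))) := by
          rw [haux, haux]
          ring
      _ ≤ 8*((n:ℝ)+1)^3 * (((2*(n:ℝ)+1) * (((2*n).factorial:ℝ))^3) * ((n:ℝ)^(2*n) * ((2*(n:ℝ)+3) * (2*(n:ℝ)+1)^2))) :=
          mul_le_mul_of_nonneg_left hprod (by positivity)
      _ = (n:ℝ)^(2*n) * ((2*((n:ℝ)+1)+1) * ((2*(n:ℝ)+2) * ((2*(n:ℝ)+1) * ((2*n).factorial:ℝ)))^3) := by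
          push_cast; ring

/-- For every integer `k ≥ 1`,
`(k!)^4 / ((2k+1) * ((2k)!)^3) ≤ (1 / (8 k²))^k`. -/
theorem stmt8 (k : ℕ) (hk : 1 ≤ k) :
    ((k.factorial : ℝ)) ^ 4 / ((2 * (k : ℝ) + 1) * ((2 * k).factorial : ℝ) ^ 3)
      ≤ (1 / (8 * (k : ℝ) ^ 2)) ^ k := by
  have hk0 : (0:ℝ) < (k:ℝ) := by exact_mod_cast hk
  have hD : (0:ℝ) < (2 * (k : ℝ) + 1) * ((2 * k).factorial : ℝ) ^ 3 := by
    have := (2*k).factorial_pos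
    have : (0:ℝ) < ((2*k).factorial : ℝ) := by exact_mod_cast this
    positivity
  have hP : (0:ℝ) < (8 * (k:ℝ)^2)^k := by positivity
  rw [div_pow, one_pow, div_le_div_iff₀ hD hP]
  have := main8 k hk
  linarith
end

section
/- Let $A, \hat{A}$ be linear operators (matrices) on a finite-dimensional inner product space with $\|\hat{A} - A\| \le E$, and for $\delta > 0$ define the Tikhonov-regularized pseudoinverses $A_\delta^+ = (A^T A + \delta I)^{-1}A^T$ and $\hat{A}_\delta^+ = (\hat{A}^T \hat{A} + \delta I)^{-1}\hat{A}^T$. Then $\|\hat{A}_\delta^+ - A_\delta^+\| \le \left(\frac{1}{\delta} + \frac{(\|A\| + \|\hat{A}\|)\max\{\|A\|, \|\hat{A}\|\}}{\delta^2}\right) E$. -/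
open ContinuousLinearMap

section
variable {n : ℕ}
local notation "E" => EuclideanSpace ℝ (Fin n)

lemma aux_lower (B : E →L[ℝ] E) {δ : ℝ} (hδ : 0 < δ) (x : E) :
    δ * ‖x‖ ≤ ‖((ContinuousLinearMap.adjoint B).comp B + δ • 1) x‖ := by
  rcases eq_or_ne x 0 with rfl | hx
  · simp
  have h1 : δ * ‖x‖ ^ 2 ≤ inner ℝ (((ContinuousLinearMap.adjoint B).comp B + δ • 1) x) x := by
    have happ : (((ContinuousLinearMap.adjoint B).comp B + δ • 1) x)
        = ContinuousLinearMap.adjoint B (B x) + δ • x := by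
      simp
    rw [happ, inner_add_left, ContinuousLinearMap.adjoint_inner_left, real_inner_smul_left,
      real_inner_self_eq_norm_sq, real_inner_self_eq_norm_sq]
    nlinarith [sq_nonneg ‖B x‖]
  have h2 : inner ℝ (((ContinuousLinearMap.adjoint B).comp B + δ • 1) x) x
      ≤ ‖((ContinuousLinearMap.adjoint B).comp B + δ • 1) x‖ * ‖x‖ :=
    real_inner_le_norm _ _
  have hxpos : 0 < ‖x‖ := norm_pos_iff.mpr hx
  nlinarith [h1.trans h2]

lemma aux_unit (B : E →L[ℝ] E) {δ : ℝ} (hδ : 0 < δ) :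
    IsUnit ((ContinuousLinearMap.adjoint B).comp B + δ • 1) := by
  rw [ContinuousLinearMap.isUnit_iff_bijective]
  set M : E →L[ℝ] E := (ContinuousLinearMap.adjoint B).comp B + δ • 1 with hM
  have hinj : Function.Injective (M : E →ₗ[ℝ] E) := by
    intro x y hxy
    have h0 : M (x - y) = 0 := by
      rw [map_sub]; simpa using sub_eq_zero.mpr hxy
    have := aux_lower B hδ (x - y)
    rw [← hM, h0, norm_zero] at this
    have : ‖x - y‖ ≤ 0 := by nlinarith
    have : x - y = 0 := by
      rw [← norm_le_zero_iff]; exact this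
    exact sub_eq_zero.mp this
  exact ⟨hinj, LinearMap.injective_iff_surjective.mp hinj⟩

lemma aux_inv_norm (B : E →L[ℝ] E) {δ : ℝ} (hδ : 0 < δ) :
    ‖Ring.inverse ((ContinuousLinearMap.adjoint B).comp B + δ • 1)‖ ≤ 1 / δ := by
  apply ContinuousLinearMap.opNorm_le_bound _ (by positivity)
  intro x
  set M := (ContinuousLinearMap.adjoint B).comp B + δ • 1 with hM
  have hMx : M (Ring.inverse M x) = x := by
    have : M * Ring.inverse M = 1 := Ring.mul_inverse_cancel M (aux_unit B hδ)
    calc M (Ring.inverse M x) = (M * Ring.inverse M) x := rfl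
      _ = x := by rw [this]; rfl
  have := aux_lower B hδ (Ring.inverse M x)
  rw [hMx] at this
  rw [div_mul_eq_mul_div, le_div_iff₀ hδ]
  linarith

end

lemma norm_adj {n : ℕ} (A : EuclideanSpace ℝ (Fin n) →L[ℝ] EuclideanSpace ℝ (Fin n)) :
    ‖ContinuousLinearMap.adjoint A‖ = ‖A‖ :=
  LinearIsometryEquiv.norm_map ContinuousLinearMap.adjoint A

set_option maxHeartbeats 1000000 in
/-- Perturbation bound for Tikhonov-regularized pseudoinverses
`A_δ⁺ = (AᵀA + δ I)⁻¹ Aᵀ` on a finite-dimensional inner-product space: if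
`‖Â - A‖ ≤ E` then `‖Â_δ⁺ - A_δ⁺‖ ≤ (1/δ + (‖A‖ + ‖Â‖) max{‖A‖,‖Â‖}/δ²) E`. -/
theorem stmt18 {n : ℕ}
    (A Ahat : EuclideanSpace ℝ (Fin n) →L[ℝ] EuclideanSpace ℝ (Fin n))
    (E δ : ℝ) (hδ : 0 < δ) (hE : ‖Ahat - A‖ ≤ E) :
    ‖(Ring.inverse ((ContinuousLinearMap.adjoint Ahat).comp Ahat + δ • 1)).comp
          (ContinuousLinearMap.adjoint Ahat)
        - (Ring.inverse ((ContinuousLinearMap.adjoint A).comp A + δ • 1)).comp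
          (ContinuousLinearMap.adjoint A)‖
      ≤ (1 / δ + (‖A‖ + ‖Ahat‖) * max ‖A‖ ‖Ahat‖ / δ ^ 2) * E := by
  set M := (ContinuousLinearMap.adjoint A).comp A + δ • 1 with hMdef
  set N := (ContinuousLinearMap.adjoint Ahat).comp Ahat + δ • 1 with hNdef
  have hM : IsUnit M := aux_unit A hδ
  have hN : IsUnit N := aux_unit Ahat hδ
  set AT := ContinuousLinearMap.adjoint A with hAT
  set BT := ContinuousLinearMap.adjoint Ahat with hBT
  have key : (Ring.inverse N) * BT - (Ring.inverse M) * AT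
      = (Ring.inverse N) * (BT - AT) + (Ring.inverse N) * ((M - N) * (Ring.inverse M * AT)) := by
    have e1 : (Ring.inverse N) * ((M - N) * (Ring.inverse M * AT))
        = (Ring.inverse N) * AT - (Ring.inverse M) * AT := by
      rw [sub_mul, mul_sub, ← mul_assoc M (Ring.inverse M) AT, Ring.mul_inverse_cancel M hM,
        one_mul, ← mul_assoc (Ring.inverse N) N, Ring.inverse_mul_cancel N hN, one_mul]
    rw [mul_sub, e1]
    abel
  have hEnn : 0 ≤ E := le_trans (norm_nonneg _) hE
  -- norm bounds
  have hNinv : ‖Ring.inverse N‖ ≤ 1 / δ := aux_inv_norm Ahat hδ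
  have hMinvAT : ‖Ring.inverse M * AT‖ ≤ (1 / δ) * max ‖A‖ ‖Ahat‖ := by
    calc ‖Ring.inverse M * AT‖ ≤ ‖Ring.inverse M‖ * ‖AT‖ := norm_mul_le _ _
      _ ≤ (1 / δ) * max ‖A‖ ‖Ahat‖ := by
          apply mul_le_mul (aux_inv_norm A hδ) ?_ (norm_nonneg _) (by positivity)
          rw [hAT, norm_adj]
          exact le_max_left _ _
  have hBTAT : ‖BT - AT‖ ≤ E := by
    rw [hBT, hAT, ← map_sub, norm_adj]
    exact hE
  have hMN : ‖M - N‖ ≤ (‖A‖ + ‖Ahat‖) * E := by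
    have hsub : M - N = AT * (A - Ahat) + (AT - BT) * Ahat := by
      rw [hMdef, hNdef, hAT, hBT]
      simp only [ContinuousLinearMap.mul_def]
      ext x
      simp [ContinuousLinearMap.comp_apply, ContinuousLinearMap.sub_apply,
        ContinuousLinearMap.add_apply, map_sub]
    rw [hsub]
    have h1 : ‖AT * (A - Ahat)‖ ≤ ‖A‖ * E := by
      calc ‖AT * (A - Ahat)‖ ≤ ‖AT‖ * ‖A - Ahat‖ := norm_mul_le _ _
        _ ≤ ‖A‖ * E := by
            rw [hAT, norm_adj, norm_sub_rev]
            exact mul_le_mul_of_nonneg_left hE (norm_nonneg _)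
    have h2 : ‖(AT - BT) * Ahat‖ ≤ E * ‖Ahat‖ := by
      calc ‖(AT - BT) * Ahat‖ ≤ ‖AT - BT‖ * ‖Ahat‖ := norm_mul_le _ _
        _ ≤ E * ‖Ahat‖ := by
            apply mul_le_mul_of_nonneg_right _ (norm_nonneg _)
            rw [hAT, hBT, ← map_sub, norm_adj, norm_sub_rev]
            exact hE
    calc ‖AT * (A - Ahat) + (AT - BT) * Ahat‖ ≤ ‖AT * (A - Ahat)‖ + ‖(AT - BT) * Ahat‖ :=
          norm_add_le _ _
      _ ≤ ‖A‖ * E + E * ‖Ahat‖ := add_le_add h1 h2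
      _ = (‖A‖ + ‖Ahat‖) * E := by ring
  have main : ‖(Ring.inverse N) * BT - (Ring.inverse M) * AT‖
      ≤ (1 / δ + (‖A‖ + ‖Ahat‖) * max ‖A‖ ‖Ahat‖ / δ ^ 2) * E := by
    rw [key]
    have t1 : ‖(Ring.inverse N) * (BT - AT)‖ ≤ (1 / δ) * E := by
      calc ‖(Ring.inverse N) * (BT - AT)‖ ≤ ‖Ring.inverse N‖ * ‖BT - AT‖ := norm_mul_le _ _
        _ ≤ (1 / δ) * E := mul_le_mul hNinv hBTAT (norm_nonneg _) (by positivity)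
    have t2 : ‖(Ring.inverse N) * ((M - N) * (Ring.inverse M * AT))‖
        ≤ (1 / δ) * (((‖A‖ + ‖Ahat‖) * E) * ((1 / δ) * max ‖A‖ ‖Ahat‖)) := by
      calc ‖(Ring.inverse N) * ((M - N) * (Ring.inverse M * AT))‖
          ≤ ‖Ring.inverse N‖ * (‖M - N‖ * ‖Ring.inverse M * AT‖) :=
            (norm_mul_le _ _).trans (mul_le_mul_of_nonneg_left (norm_mul_le _ _) (norm_nonneg _))
        _ ≤ (1 / δ) * (((‖A‖ + ‖Ahat‖) * E) * ((1 / δ) * max ‖A‖ ‖Ahat‖)) := by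
            apply mul_le_mul hNinv _ (mul_nonneg (norm_nonneg _) (norm_nonneg _))
              (by positivity)
            apply mul_le_mul hMN hMinvAT (norm_nonneg _)
              (mul_nonneg (add_nonneg (norm_nonneg _) (norm_nonneg _)) hEnn)
    calc ‖(Ring.inverse N) * (BT - AT) + (Ring.inverse N) * ((M - N) * (Ring.inverse M * AT))‖
        ≤ ‖(Ring.inverse N) * (BT - AT)‖ + ‖(Ring.inverse N) * ((M - N) * (Ring.inverse M * AT))‖ :=
          norm_add_le _ _
      _ ≤ (1 / δ) * E + (1 / δ) * (((‖A‖ + ‖Ahat‖) * E) * ((1 / δ) * max ‖A‖ ‖Ahat‖)) :=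
          add_le_add t1 t2
      _ = (1 / δ + (‖A‖ + ‖Ahat‖) * max ‖A‖ ‖Ahat‖ / δ ^ 2) * E := by
          have hδ' : δ ≠ 0 := ne_of_gt hδ
          generalize ‖A‖ + ‖Ahat‖ = a
          generalize max ‖A‖ ‖Ahat‖ = m
          field_simp
  simpa only [ContinuousLinearMap.mul_def] using main
end
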